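/- Let O = ⋂_{n∈ℕ⁺} A_{α_n,β_n}. If K is any unbounded subset of 𝔈 and ε > 0, then K + B(0, ε) ⊄ O, where B(0, ε) = {y ∈ 𝔈 : ‖y‖ < ε}; i.e., there exist x ∈ K and y ∈ 𝔈 with ‖y‖ < ε and x + y ∉ O. -/

import Mathlib

noncomputable section

open scoped ENNReal

/-- The ambient Hilbert space `ℓ²` of real square-summable sequences. -/
abbrev ellTwo : Type := lp (fun _ : ℕ => ℝ) 2

/-- Erdős space `𝔈`: the additive subgroup of `ℓ²` consisting of the sequences
all of whose coordinates are rational. -/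
def Erdos : AddSubgroup ellTwo where
  carrier := {x | ∀ k, ∃ q : ℚ, (x : ℕ → ℝ) k = (q : ℝ)}
  add_mem' := by
    intro a b ha hb k
    obtain ⟨p, hp⟩ := ha k
    obtain ⟨q, hq⟩ := hb k
    exact ⟨p + q, by rw [lp.coeFn_add]; simp [hp, hq]⟩
  zero_mem' := fun k => ⟨0, by simp⟩
  neg_mem' := by
    intro a ha k
    obtain ⟨p, hp⟩ := ha k
    exact ⟨-p, by rw [lp.coeFn_neg]; simp [hp]⟩

/-- Erdős space as a type (with the subspace topology and norm inherited from `ℓ²`). -/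
abbrev ErdosSpace : Type := ↥Erdos

/-- The coordinates of a point of Erdős space (indexed from `0`, so that the
coordinate `x_k` of the paper is `coords x (k-1)`). -/
def coords (x : ErdosSpace) : ℕ → ℝ := ((x : ellTwo) : ℕ → ℝ)

/-- `mExists x α` says that `m_{x,α}` exists, i.e. some finite initial sum of squares
of coordinates exceeds `α` (here `m` counts how many initial coordinates are taken). -/
def mExists (x : ErdosSpace) (α : ℝ) : Prop :=
  ∃ m : ℕ, α < Real.sqrt (∑ k ∈ Finset.range m, (coords x k) ^ 2)

/-- `mIndex x α` is the least `m` such that `√(∑_{k<m} x_k²) > α` (and `0` if none exists);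
this corresponds to `m_{x,α}` of the paper. -/
def mIndex (x : ErdosSpace) (α : ℝ) : ℕ :=
  sInf {m : ℕ | α < Real.sqrt (∑ k ∈ Finset.range m, (coords x k) ^ 2)}

/-- The set `A_{α,β}`: those `x` for which either `m_{x,α}` exists and every coordinate
beyond the first `m_{x,α}` ones has absolute value `< β`, or `m_{x,α}` does not exist. -/
def A (α β : ℝ) : Set ErdosSpace :=
  {x | (mExists x α ∧ ∀ l, mIndex x α ≤ l → |coords x l| < β) ∨ ¬mExists x α}


set_option maxHeartbeats 1000000 in
/-- For `O = ⋂ₙ A_{αₙ,βₙ}`, any unbounded set `K` and any `ε > 0` satisfy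
`K + B(0,ε) ⊄ O`. -/
theorem K_plus_ball_not_subset_O (a b : ℕ → ℝ) (ha0 : ∀ n, 0 < a n) (haMono : StrictMono a)
    (haTop : Filter.Tendsto a Filter.atTop Filter.atTop)
    (haIrr : ∀ n, Irrational ((a n) ^ 2))
    (hb0 : ∀ n, 0 < b n) (hbAnti : StrictAnti b)
    (hbLim : Filter.Tendsto b Filter.atTop (nhds 0))
    (hbIrr : ∀ n, Irrational (b n))
    (K : Set ErdosSpace) (hKunb : ∀ M : ℝ, 0 < M → ∃ x ∈ K, M < ‖x‖)
    (ε : ℝ) (hε : 0 < ε) :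
    ∃ x ∈ K, ∃ y : ErdosSpace, ‖y‖ < ε ∧ x + y ∉ ⋂ n, A (a n) (b n) := by
  -- choose n with b n < ε
  obtain ⟨n, hn⟩ : ∃ n, b n < ε := (hbLim.eventually (gt_mem_nhds hε)).exists
  -- rational q with b n < q < ε
  obtain ⟨q, hq1, hq2⟩ := exists_rat_btwn hn
  have hq0 : (0:ℝ) < (q:ℝ) := (hb0 n).trans hq1
  -- x ∈ K with ‖x‖ > a n
  obtain ⟨x, hxK, hx⟩ := hKunb (a n) (ha0 n)
  have hp2 : (0:ℝ) < (2:ℝ≥0∞).toReal := by norm_num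
  have hHS := lp.hasSum_norm hp2 (x : ellTwo)
  have htR : (2:ℝ≥0∞).toReal = (2:ℕ) := by norm_num
  have hHS' : HasSum (fun k => (coords x k) ^ 2) (‖x‖ ^ 2) := by
    have : ∀ k, ‖(x : ellTwo) k‖ ^ (2:ℝ≥0∞).toReal = (coords x k) ^ 2 := by
      intro k
      rw [htR, Real.rpow_natCast]
      simp [coords, Real.norm_eq_abs, sq_abs]
    have h2 : ‖(x : ellTwo)‖ ^ (2:ℝ≥0∞).toReal = ‖x‖ ^ 2 := by
      rw [htR, Real.rpow_natCast]; rfl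
    rw [funext this, h2] at hHS
    exact hHS
  -- an m with partial sum exceeding (a n)^2
  have hlim := hHS'.tendsto_sum_nat
  have hxsq : (a n) ^ 2 < ‖x‖ ^ 2 := by
    have h0 : (0:ℝ) ≤ a n := (ha0 n).le
    nlinarith
  obtain ⟨m, hm⟩ := (hlim.eventually (lt_mem_nhds hxsq)).exists
  -- coordinates tend to 0
  have hcoord0 : Filter.Tendsto (fun k => (coords x k) ^ 2) Filter.atTop (nhds 0) :=
    hHS'.summable.tendsto_atTop_zero
  have hd0 : (0:ℝ) < (q:ℝ) - b n := sub_pos.mpr hq1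
  have hδ : (0:ℝ) < ((q:ℝ) - b n) ^ 2 := pow_pos hd0 2
  obtain ⟨k₀, hk₀⟩ := (hcoord0.eventually (gt_mem_nhds hδ)).exists_forall_of_atTop
  set j := max m k₀ with hj
  have hjm : m ≤ j := le_max_left _ _
  have hjk : |coords x j| < (q:ℝ) - b n := by
    have h := hk₀ j (le_max_right _ _)
    by_contra hcon
    push_neg at hcon
    have : ((q:ℝ) - b n) ^ 2 ≤ (coords x j) ^ 2 := by
      have := sq_le_sq' (by linarith [abs_nonneg (coords x j), hq1]) hcon
      calc ((q:ℝ) - b n) ^ 2 ≤ |coords x j| ^ 2 := by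
              apply pow_le_pow_left₀ hd0.le hcon
           _ = (coords x j) ^ 2 := sq_abs _
    linarith
  -- the perturbation y
  have hymem : (lp.single 2 j ((q:ℝ)) : ellTwo) ∈ Erdos := by
    intro k
    by_cases hk : k = j
    · subst hk; exact ⟨q, by rw [lp.single_apply_self]⟩
    · exact ⟨0, by rw [lp.single_apply_ne _ _ _ hk]; simp⟩
  refine ⟨x, hxK, ⟨lp.single 2 j ((q:ℝ)), hymem⟩, ?_, ?_⟩
  · rw [AddSubgroup.coe_norm, lp.norm_single (E := fun _ : ℕ => ℝ) (by norm_num) j ((q:ℝ)),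
      Real.norm_eq_abs, abs_of_pos hq0]
    exact hq2
  · set y : ErdosSpace := ⟨lp.single 2 j ((q:ℝ)), hymem⟩ with hy
    set z := x + y with hzdef
    -- coords of z
    have hcz : ∀ k, coords z k = coords x k + (lp.single 2 j ((q:ℝ)) : ∀ _ : ℕ, ℝ) k := by
      intro k
      show ((z : ellTwo) : ℕ → ℝ) k = _
      have : (z : ellTwo) = (x : ellTwo) + lp.single 2 j ((q:ℝ)) := rfl
      rw [this, lp.coeFn_add]
      rfl
    have hczne : ∀ k, k ≠ j → coords z k = coords x k := by
      intro k hk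
      rw [hcz k, lp.single_apply_ne _ _ _ hk, add_zero]
    have hczj : coords z j = coords x j + q := by
      rw [hcz j, lp.single_apply_self]
    -- mExists z (a n)
    have hmE : mExists z (a n) := by
      refine ⟨m, ?_⟩
      have hsum : ∑ k ∈ Finset.range m, (coords z k) ^ 2
          = ∑ k ∈ Finset.range m, (coords x k) ^ 2 := by
        apply Finset.sum_congr rfl
        intro k hk
        exact congrArg (· ^ 2) (hczne k (Nat.ne_of_lt (lt_of_lt_of_le (Finset.mem_range.mp hk) hjm)))
      rw [hsum]
      exact (Real.lt_sqrt (ha0 n).le).mpr hm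
    -- mIndex z (a n) ≤ j
    have hmIdx : mIndex z (a n) ≤ j := by
      refine le_trans (Nat.sInf_le ?_) hjm
      have hsum : ∑ k ∈ Finset.range m, (coords z k) ^ 2
          = ∑ k ∈ Finset.range m, (coords x k) ^ 2 := by
        apply Finset.sum_congr rfl
        intro k hk
        exact congrArg (· ^ 2) (hczne k (Nat.ne_of_lt (lt_of_lt_of_le (Finset.mem_range.mp hk) hjm)))
      show a n < Real.sqrt (∑ k ∈ Finset.range m, (coords z k) ^ 2)
      rw [hsum]
      exact (Real.lt_sqrt (ha0 n).le).mpr hm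
    -- |coords z j| ≥ b n
    have hbig : ¬ |coords z j| < b n := by
      rw [hczj]
      have h1 : (q:ℝ) - |coords x j| ≤ |coords x j + (q:ℝ)| := by
        have h2 := abs_sub_abs_le_abs_sub ((q:ℝ)) (-(coords x j))
        rw [abs_of_pos hq0, abs_neg, sub_neg_eq_add, add_comm ((q:ℝ)) (coords x j)] at h2
        exact h2
      push_neg
      linarith
    intro hO
    have hA := Set.mem_iInter.mp hO n
    rcases hA with ⟨_, hall⟩ | hne
    · exact hbig (hall j hmIdx)
    · exact hne hmE
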